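/- Let g = g_{5,3,4}. For every F ∈ g*, the skew-symmetric bilinear form B_F has rank either 0 or 2; equivalently, the subspace {X ∈ g : F([X, Y]) = 0 for all Y ∈ g} has dimension 5 or 3. (This is the infinitesimal MD-condition: every coadjoint orbit of the corresponding connected simply connected Lie group G_{5,3,4} has dimension 0 or 2, so it is an MD5-group.) -/

import Mathlib

open scoped Matrix

/-- The Lie bracket of g_{5,3,4}: [X1,X2] = X3, [X2,X3] = X3, [X2,X4] = X4, [X2,X5] = X5,
written in coordinates with respect to the basis (X₁, X₂, X₃, X₄, X₅) (all other
brackets of basis vectors vanish); it is the bilinear extension of the structure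
constants above. -/
def bracketg534 (U V : Fin 5 → ℝ) : Fin 5 → ℝ :=
  ![0, 0,
    (U 0 * V 1 - U 1 * V 0) + (U 1 * V 2 - U 2 * V 1),
    U 1 * V 3 - U 3 * V 1,
    U 1 * V 4 - U 4 * V 1]

/-- The matrix (in the basis (X₁, ..., X₅)) of the skew-symmetric bilinear form
B_F(X, Y) = F([X, Y]); the functional F is identified with its coordinate vector with
respect to the dual basis, acting by the dot product. -/
def BFg534 (F : Fin 5 → ℝ) : Matrix (Fin 5) (Fin 5) ℝ :=
  Matrix.of fun i j => F ⬝ᵥ bracketg534 (Pi.single i 1) (Pi.single j 1)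

/-- The radical {X ∈ g | F([X, Y]) = 0 for all Y ∈ g} of the form B_F, as a subspace. -/
def radg534 (F : Fin 5 → ℝ) : Submodule ℝ (Fin 5 → ℝ) where
  carrier := {X | ∀ Y : Fin 5 → ℝ, F ⬝ᵥ bracketg534 X Y = 0}
  zero_mem' := by
    intro Y
    simp [bracketg534, dotProduct, Fin.sum_univ_five]
  add_mem' := by
    intro a b ha hb Y
    have h1 := ha Y
    have h2 := hb Y
    simp only [bracketg534, dotProduct, Fin.sum_univ_five, Matrix.cons_val_zero,
      Matrix.cons_val_one, Matrix.head_cons, Matrix.cons_val_two, Matrix.tail_cons,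
      Matrix.cons_val_three, Matrix.cons_val_four, Pi.add_apply] at h1 h2 ⊢
    linear_combination h1 + h2
  smul_mem' := by
    intro c a ha Y
    have h1 := ha Y
    simp only [bracketg534, dotProduct, Fin.sum_univ_five, Matrix.cons_val_zero,
      Matrix.cons_val_one, Matrix.head_cons, Matrix.cons_val_two, Matrix.tail_cons,
      Matrix.cons_val_three, Matrix.cons_val_four, Pi.smul_apply, smul_eq_mul] at h1 ⊢
    linear_combination c * h1


private lemma bf_eq (F : Fin 5 → ℝ) : BFg534 F =
    !![0, F 2, 0, 0, 0;
       -F 2, 0, F 2, F 3, F 4;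
       0, -F 2, 0, 0, 0;
       0, -F 3, 0, 0, 0;
       0, -F 4, 0, 0, 0] := by
  ext i j
  fin_cases i <;> fin_cases j <;>
    (simp [BFg534, bracketg534, dotProduct, Fin.sum_univ_five, Pi.single_apply,
      Matrix.vecHead, Matrix.vecTail]; try ring)

private lemma mem_rad_iff (F X : Fin 5 → ℝ) : X ∈ radg534 F ↔
    (F 2 * X 1 = 0 ∧ F 3 * X 1 = 0 ∧ F 4 * X 1 = 0 ∧
     F 2 * X 0 - F 2 * X 2 - F 3 * X 3 - F 4 * X 4 = 0) := by
  constructor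
  · intro h
    have h1 := h ![0, 1, 0, 0, 0]
    have h2 := h ![0, 0, 1, 0, 0]
    have h3 := h ![0, 0, 0, 1, 0]
    have h4 := h ![0, 0, 0, 0, 1]
    simp only [bracketg534, dotProduct, Fin.sum_univ_five, Matrix.cons_val_zero,
      Matrix.cons_val_one, Matrix.head_cons, Matrix.cons_val_two, Matrix.tail_cons,
      Matrix.cons_val_three, Matrix.cons_val_four] at h1 h2 h3 h4
    refine ⟨by linear_combination h2, by linear_combination h3, by linear_combination h4,
      by linear_combination h1⟩
  · rintro ⟨a, b, c, d⟩ Y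
    simp only [bracketg534, dotProduct, Fin.sum_univ_five, Matrix.cons_val_zero,
      Matrix.cons_val_one, Matrix.head_cons, Matrix.cons_val_two, Matrix.tail_cons,
      Matrix.cons_val_three, Matrix.cons_val_four]
    linear_combination (Y 2 - Y 0) * a + Y 3 * b + Y 4 * c + Y 1 * d

private lemma ker_bf_eq_rad (F : Fin 5 → ℝ) :
    LinearMap.ker (BFg534 F).mulVecLin = radg534 F := by
  ext X
  rw [LinearMap.mem_ker, mem_rad_iff, bf_eq]
  constructor
  · intro h
    have h0 := congrFun h 0
    have h1 := congrFun h 1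
    have h3 := congrFun h 3
    have h4 := congrFun h 4
    simp [Matrix.mulVecLin_apply, Matrix.mulVec, dotProduct, Fin.sum_univ_five,
      Matrix.vecHead, Matrix.vecTail, -mul_eq_zero] at h0 h1 h3 h4
    exact ⟨by linear_combination h0, by linear_combination h3, by linear_combination h4,
      by linear_combination -h1⟩
  · rintro ⟨a, b, c, d⟩
    funext j
    fin_cases j <;>
      (simp [Matrix.mulVecLin_apply, Matrix.mulVec, dotProduct, Fin.sum_univ_five,
        Matrix.vecHead, Matrix.vecTail, -mul_eq_zero]; linarith [a, b, c, d])

private lemma rad_eq_ker_M (F : Fin 5 → ℝ) (hne : F 2 ≠ 0 ∨ F 3 ≠ 0 ∨ F 4 ≠ 0) :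
    radg534 F = LinearMap.ker
      (!![0, 1, 0, 0, 0; F 2, 0, -F 2, -F 3, -F 4] : Matrix (Fin 2) (Fin 5) ℝ).mulVecLin := by
  ext X
  rw [LinearMap.mem_ker, mem_rad_iff]
  constructor
  · rintro ⟨a, b, c, d⟩
    have hX1 : X 1 = 0 := by
      rcases hne with h | h | h
      · exact (mul_eq_zero.1 a).resolve_left h
      · exact (mul_eq_zero.1 b).resolve_left h
      · exact (mul_eq_zero.1 c).resolve_left h
    funext j
    fin_cases j <;>
      (simp [Matrix.mulVecLin_apply, Matrix.mulVec, dotProduct, Fin.sum_univ_five,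
        Matrix.vecHead, Matrix.vecTail, hX1, -mul_eq_zero]; try linarith [d])
  · intro h
    have h0 := congrFun h 0
    have h1 := congrFun h 1
    simp [Matrix.mulVecLin_apply, Matrix.mulVec, dotProduct, Fin.sum_univ_five,
      Matrix.vecHead, Matrix.vecTail, -mul_eq_zero] at h0 h1
    refine ⟨by rw [h0]; ring, by rw [h0]; ring, by rw [h0]; ring, by linear_combination h1⟩

private lemma range_M_top (F : Fin 5 → ℝ) (hne : F 2 ≠ 0 ∨ F 3 ≠ 0 ∨ F 4 ≠ 0) :
    LinearMap.range
      (!![0, 1, 0, 0, 0; F 2, 0, -F 2, -F 3, -F 4] : Matrix (Fin 2) (Fin 5) ℝ).mulVecLin = ⊤ := by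
  rw [LinearMap.range_eq_top]
  intro v
  rcases hne with h | h | h
  · refine ⟨![v 1 / F 2, v 0, 0, 0, 0], ?_⟩
    funext j
    fin_cases j <;>
      (simp [Matrix.mulVecLin_apply, Matrix.mulVec, dotProduct, Fin.sum_univ_five,
        Matrix.vecHead, Matrix.vecTail]; try field_simp)
  · refine ⟨![0, v 0, 0, -(v 1) / F 3, 0], ?_⟩
    funext j
    fin_cases j <;>
      (simp [Matrix.mulVecLin_apply, Matrix.mulVec, dotProduct, Fin.sum_univ_five,
        Matrix.vecHead, Matrix.vecTail]; try field_simp)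
  · refine ⟨![0, v 0, 0, 0, -(v 1) / F 4], ?_⟩
    funext j
    fin_cases j <;>
      (simp [Matrix.mulVecLin_apply, Matrix.mulVec, dotProduct, Fin.sum_univ_five,
        Matrix.vecHead, Matrix.vecTail]; try field_simp)

private lemma finrank_rad_eq_three (F : Fin 5 → ℝ) (hne : F 2 ≠ 0 ∨ F 3 ≠ 0 ∨ F 4 ≠ 0) :
    Module.finrank ℝ (radg534 F) = 3 := by
  have h := LinearMap.finrank_range_add_finrank_ker
    (!![0, 1, 0, 0, 0; F 2, 0, -F 2, -F 3, -F 4] : Matrix (Fin 2) (Fin 5) ℝ).mulVecLin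
  rw [range_M_top F hne, finrank_top] at h
  simp only [Module.finrank_fin_fun] at h
  rw [rad_eq_ker_M F hne]
  omega

/-- For every functional F, the skew-symmetric form B_F has rank 0 or 2; equivalently,
its radical {X | F([X, Y]) = 0 for all Y} has dimension 5 or 3 (the infinitesimal
MD-condition: every coadjoint orbit has dimension 0 or 2). -/
theorem md_condition_g534 (F : Fin 5 → ℝ) :
    ((BFg534 F).rank = 0 ∨ (BFg534 F).rank = 2) ∧
    (Module.finrank ℝ (radg534 F) = 5 ∨ Module.finrank ℝ (radg534 F) = 3) := by
  by_cases hz : F 2 = 0 ∧ F 3 = 0 ∧ F 4 = 0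
  · obtain ⟨h2, h3, h4⟩ := hz
    have hB : BFg534 F = 0 := by
      rw [bf_eq]
      ext i j
      fin_cases i <;> fin_cases j <;> simp [h2, h3, h4, Matrix.vecHead, Matrix.vecTail]
    have hrad : radg534 F = ⊤ := by
      ext X
      simp [mem_rad_iff, h2, h3, h4]
    constructor
    · left; rw [hB, Matrix.rank_zero]
    · left
      rw [hrad, finrank_top]
      simp [Module.finrank_fin_fun]
  · have hne : F 2 ≠ 0 ∨ F 3 ≠ 0 ∨ F 4 ≠ 0 := by
      by_contra h
      push_neg at h
      exact hz ⟨h.1, h.2.1, h.2.2⟩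
    have hrad := finrank_rad_eq_three F hne
    refine ⟨Or.inr ?_, Or.inr hrad⟩
    have h := LinearMap.finrank_range_add_finrank_ker (BFg534 F).mulVecLin
    rw [ker_bf_eq_rad, hrad] at h
    simp only [Module.finrank_fin_fun] at h
    rw [Matrix.rank]
    omega
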